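/- Let G be a controllable graph on n vertices. An n-vertex graph H is generalized cospectral with G if and only if there exists a regular rational orthogonal matrix Q with Q^T A(G) Q = A(H); moreover, such a Q is unique and satisfies Q^T = W(H)·W(G)^{-1}. -/

import Mathlib

open Polynomial Matrix BigOperators

/-- The all-ones matrix J. -/
def Jmat (n : ℕ) : Matrix (Fin n) (Fin n) ℤ := Matrix.of fun _ _ => 1

/-- The adjacency matrix of a graph, over ℤ. -/
def adjMat {n : ℕ} (G : SimpleGraph (Fin n)) [DecidableRel G.Adj] : Matrix (Fin n) (Fin n) ℤ :=
  G.adjMatrix ℤ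

/-- The walk matrix W(G) = [e, Ae, …, A^{n-1}e] (column j is A^j e). -/
def walkMat {n : ℕ} (G : SimpleGraph (Fin n)) [DecidableRel G.Adj] : Matrix (Fin n) (Fin n) ℤ :=
  Matrix.of fun i j => ((adjMat G ^ (j : ℕ)) *ᵥ fun _ => (1 : ℤ)) i

lemma adjMatR_isHermitian {n : ℕ} (G : SimpleGraph (Fin n)) [DecidableRel G.Adj] :
    (G.adjMatrix ℝ).IsHermitian := by
  unfold Matrix.IsHermitian
  ext i j
  simp [Matrix.conjTranspose_apply, SimpleGraph.adjMatrix_apply, G.adj_comm i j]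

/-- The (real) eigenvalues α_1, …, α_n of the adjacency matrix of a graph. -/
noncomputable def graphEig {n : ℕ} (G : SimpleGraph (Fin n)) [DecidableRel G.Adj] : Fin n → ℝ :=
  (adjMatR_isHermitian G).eigenvalues

/-- The discriminant Δ(G) = ∏_{i>j} (α_i - α_j)^2; it is an integer, so we may recover it
from the real product by taking the floor. -/
noncomputable def discG {n : ℕ} (G : SimpleGraph (Fin n)) [DecidableRel G.Adj] : ℤ :=
  ⌊∏ i : Fin n, ∏ j : Fin n,
      if (j : ℕ) < (i : ℕ) then (graphEig G i - graphEig G j) ^ 2 else 1⌋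

/-- θ(G) = gcd(2^{-⌊n/2⌋}·det W(G), Δ(G)).  (Here `det W / 2 ^ (n / 2)` is integer division,
which agrees with exact division since 2^⌊n/2⌋ always divides det W.) -/
noncomputable def thetaG {n : ℕ} (G : SimpleGraph (Fin n)) [DecidableRel G.Adj] : ℕ :=
  Int.gcd ((walkMat G).det / 2 ^ (n / 2)) (discG G)

/-- Two graphs are generalized cospectral if A and A+J of the two graphs have, respectively,
the same characteristic polynomials. -/
def genCospectral {n : ℕ} (G H : SimpleGraph (Fin n)) [DecidableRel G.Adj]
    [DecidableRel H.Adj] : Prop :=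
  (adjMat G).charpoly = (adjMat H).charpoly ∧
    (adjMat G + Jmat n).charpoly = (adjMat H + Jmat n).charpoly

/-- G is determined by its generalized spectrum (DGS). -/
def IsDGS {n : ℕ} (G : SimpleGraph (Fin n)) [DecidableRel G.Adj] : Prop :=
  ∀ (H : SimpleGraph (Fin n)) [DecidableRel H.Adj], genCospectral G H → Nonempty (G ≃g H)

namespace GCH

variable {n : ℕ}

/-- The linear functional M ↦ eᵀ M e. -/
noncomputable def phi : Matrix (Fin n) (Fin n) ℚ →ₗ[ℚ] ℚ where
  toFun M := (fun _ => (1:ℚ)) ⬝ᵥ (M *ᵥ fun _ => (1:ℚ))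
  map_add' M N := by simp [Matrix.add_mulVec, dotProduct_add]
  map_smul' c M := by simp [Matrix.smul_mulVec, dotProduct_smul]

lemma phi_apply (M : Matrix (Fin n) (Fin n) ℚ) :
    phi M = (fun _ => (1:ℚ)) ⬝ᵥ (M *ᵥ fun _ => (1:ℚ)) := rfl

noncomputable def wk (A : Matrix (Fin n) (Fin n) ℚ) (k : ℕ) : ℚ := phi (A ^ k)

lemma eval_charpoly' (A : Matrix (Fin n) (Fin n) ℚ) (x : ℚ) :
    A.charpoly.eval x = (x • (1 : Matrix (Fin n) (Fin n) ℚ) - A).det := by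
  rw [Matrix.charpoly, eval_det, matPolyEquiv_charmatrix]
  congr 1
  simp only [Polynomial.eval_sub, Polynomial.eval_X, Polynomial.eval_C]
  congr 1
  rw [Matrix.smul_one_eq_diagonal]
  ext i j
  simp [Matrix.algebraMap_matrix_apply]

lemma natDegree_charpoly (A : Matrix (Fin n) (Fin n) ℚ) : A.charpoly.natDegree = n := by
  simpa using A.charpoly_natDegree_eq_dim

lemma coeff_charpoly_n (A : Matrix (Fin n) (Fin n) ℚ) : A.charpoly.coeff n = 1 := by
  have h2 := A.charpoly_monic.coeff_natDegree
  rwa [natDegree_charpoly] at h2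

/-- Cayley-Hamilton as a finite sum. -/
lemma ch_sum (A : Matrix (Fin n) (Fin n) ℚ) :
    ∑ j ∈ Finset.range (n + 1), A.charpoly.coeff j • A ^ j = 0 := by
  have h := Matrix.aeval_self_charpoly A
  rwa [Polynomial.aeval_eq_sum_range, natDegree_charpoly] at h

noncomputable def Nmat (A : Matrix (Fin n) (Fin n) ℚ) (x : ℚ) : Matrix (Fin n) (Fin n) ℚ :=
  ∑ j ∈ Finset.range (n+1), A.charpoly.coeff j •
    (∑ i ∈ Finset.range j, x ^ (j-1-i) • A ^ i)

lemma geom (A : Matrix (Fin n) (Fin n) ℚ) (x : ℚ) (j : ℕ) :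
    (x • (1 : Matrix (Fin n) (Fin n) ℚ) - A) *
      (∑ i ∈ Finset.range j, x ^ (j - 1 - i) • A ^ i) = x ^ j • 1 - A ^ j := by
  induction j with
  | zero => simp
  | succ j ih =>
    have hsum : (∑ i ∈ Finset.range (j+1), x ^ (j + 1 - 1 - i) • A ^ i)
        = x • (∑ i ∈ Finset.range j, x ^ (j - 1 - i) • A ^ i) + A ^ j := by
      rw [Finset.sum_range_succ, Finset.smul_sum]
      congr 1
      · apply Finset.sum_congr rfl
        intro i hi
        rw [Finset.mem_range] at hi
        rw [smul_smul, ← pow_succ']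
        congr 2
        omega
      · simp
    rw [hsum, Matrix.mul_add, Matrix.mul_smul, ih]
    rw [Matrix.sub_mul, Matrix.smul_mul, Matrix.one_mul]
    rw [smul_sub, smul_smul, ← pow_succ', ← pow_succ']
    abel

lemma Nmat_mul (A : Matrix (Fin n) (Fin n) ℚ) (x : ℚ) :
    (x • (1 : Matrix (Fin n) (Fin n) ℚ) - A) * Nmat A x = (A.charpoly.eval x) • 1 := by
  rw [Nmat, Finset.mul_sum]
  have : ∀ j ∈ Finset.range (n+1),
      (x • (1 : Matrix (Fin n) (Fin n) ℚ) - A) *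
        (A.charpoly.coeff j • ∑ i ∈ Finset.range j, x ^ (j-1-i) • A ^ i)
      = A.charpoly.coeff j • (x ^ j • (1 : Matrix (Fin n) (Fin n) ℚ)) -
        A.charpoly.coeff j • A ^ j := by
    intro j _
    rw [Matrix.mul_smul, geom, smul_sub]
  rw [Finset.sum_congr rfl this, Finset.sum_sub_distrib, ch_sum, sub_zero]
  have he : A.charpoly.eval x = ∑ j ∈ Finset.range (n+1), A.charpoly.coeff j * x ^ j := by
    rw [Polynomial.eval_eq_sum_range, natDegree_charpoly]
  rw [he, Finset.sum_smul]
  apply Finset.sum_congr rfl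
  intro j _
  rw [smul_smul]

lemma inv_eq (A : Matrix (Fin n) (Fin n) ℚ) (x : ℚ) (hx : A.charpoly.eval x ≠ 0) :
    (x • (1 : Matrix (Fin n) (Fin n) ℚ) - A)⁻¹ = (A.charpoly.eval x)⁻¹ • Nmat A x := by
  apply Matrix.inv_eq_right_inv
  rw [Matrix.mul_smul, Nmat_mul, smul_smul, inv_mul_cancel₀ hx, one_smul]

lemma phi_Nmat (A : Matrix (Fin n) (Fin n) ℚ) (x : ℚ) :
    phi (Nmat A x) = ∑ j ∈ Finset.range (n+1), A.charpoly.coeff j *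
      ∑ i ∈ Finset.range j, x ^ (j-1-i) * wk A i := by
  rw [Nmat, map_sum]
  apply Finset.sum_congr rfl
  intro j _
  rw [_root_.map_smul, map_sum, smul_eq_mul]
  congr 1
  apply Finset.sum_congr rfl
  intro i _
  rw [_root_.map_smul, smul_eq_mul, wk]

def Jq (n : ℕ) : Matrix (Fin n) (Fin n) ℚ := Matrix.of fun _ _ => 1

lemma det_rank_one (A : Matrix (Fin n) (Fin n) ℚ) (x : ℚ) (hx : A.charpoly.eval x ≠ 0) :
    (A + Jq n).charpoly.eval x
      = A.charpoly.eval x * (1 - phi ((x • (1 : Matrix (Fin n) (Fin n) ℚ) - A)⁻¹)) := by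
  set M : Matrix (Fin n) (Fin n) ℚ := x • 1 - A with hM
  have hdet : M.det = A.charpoly.eval x := (eval_charpoly' A x).symm
  have hsplit : x • (1 : Matrix (Fin n) (Fin n) ℚ) - (A + Jq n)
      = M + Matrix.replicateCol Unit (fun _ => (-1 : ℚ)) * Matrix.replicateRow Unit (fun _ => (1 : ℚ)) := by
    ext i j
    simp [hM, Matrix.mul_apply, Jq, Matrix.replicateCol_apply, Matrix.replicateRow_apply, Matrix.sub_apply, Matrix.add_apply]
    ring
  have hunit : IsUnit M.det := by rw [hdet]; exact isUnit_iff_ne_zero.mpr hx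
  rw [eval_charpoly', hsplit, Matrix.det_add_replicateCol_mul_replicateRow hunit, hdet]
  congr 1
  rw [Matrix.det_unique]
  rw [phi_apply]
  simp only [Matrix.add_apply, Matrix.one_apply_eq, Matrix.mul_apply, Matrix.replicateRow_apply,
    Matrix.replicateCol_apply, Finset.univ_unique, Finset.sum_singleton, dotProduct, mulVec]
  rw [sub_eq_add_neg]
  congr 1
  simp only [one_mul, mul_one, mul_neg, ← Finset.sum_neg_distrib]
  rw [Finset.sum_comm]

/-- Triangular system lemma. -/
lemma tri (c d : ℕ → ℚ) (hc : c n = 1)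
    (h : (∑ j ∈ Finset.range (n+1), Polynomial.C (c j) *
        ∑ i ∈ Finset.range j, Polynomial.C (d i) * Polynomial.X ^ (j-1-i)) = 0) :
    ∀ m, m < n → d m = 0 := by
  intro m
  induction m using Nat.strong_induction_on with
  | _ m IH =>
    intro hm
    have h0 : (∑ j ∈ Finset.range (n+1), Polynomial.C (c j) *
        ∑ i ∈ Finset.range j, Polynomial.C (d i) * Polynomial.X ^ (j-1-i)).coeff (n-1-m) = 0 := by
      rw [h]; simp
    rw [Polynomial.finset_sum_coeff] at h0
    have hterm : ∀ j ∈ Finset.range (n+1),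
        (Polynomial.C (c j) * ∑ i ∈ Finset.range j,
          Polynomial.C (d i) * Polynomial.X ^ (j-1-i)).coeff (n-1-m)
        = c j * ∑ i ∈ Finset.range j, d i * (if n-1-m = j-1-i then 1 else 0) := by
      intro j _
      rw [Polynomial.coeff_C_mul, Polynomial.finset_sum_coeff]
      congr 1
      apply Finset.sum_congr rfl
      intro i _
      rw [Polynomial.coeff_C_mul, Polynomial.coeff_X_pow]
    rw [Finset.sum_congr rfl hterm, Finset.sum_range_succ] at h0
    have hlast : c n * (∑ i ∈ Finset.range n, d i * (if n-1-m = n-1-i then 1 else 0)) = d m := by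
      rw [hc, one_mul]
      have : ∀ i ∈ Finset.range n, d i * (if n-1-m = n-1-i then 1 else 0)
          = if i = m then d i else 0 := by
        intro i hi
        rw [Finset.mem_range] at hi
        by_cases hcase : i = m
        · subst hcase; simp
        · rw [if_neg hcase, if_neg (by omega), mul_zero]
      rw [Finset.sum_congr rfl this, Finset.sum_ite_eq' _ m]
      rw [if_pos (Finset.mem_range.mpr hm)]
    have hrest : ∀ j ∈ Finset.range n,
        c j * (∑ i ∈ Finset.range j, d i * (if n-1-m = j-1-i then 1 else 0)) = 0 := by
      intro j hj
      rw [Finset.mem_range] at hj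
      have : ∀ i ∈ Finset.range j, d i * (if n-1-m = j-1-i then 1 else 0) = 0 := by
        intro i hi
        rw [Finset.mem_range] at hi
        by_cases hcase : n-1-m = j-1-i
        · have him : i < m := by omega
          rw [IH i him (by omega), zero_mul]
        · rw [if_neg hcase, mul_zero]
      rw [Finset.sum_congr rfl this, Finset.sum_const_zero, mul_zero]
    rw [Finset.sum_congr rfl hrest, Finset.sum_const_zero, zero_add, hlast] at h0
    exact h0

/-- The walk generating polynomial. -/
noncomputable def FP (A : Matrix (Fin n) (Fin n) ℚ) : ℚ[X] :=
  ∑ j ∈ Finset.range (n+1), Polynomial.C (A.charpoly.coeff j) *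
    ∑ i ∈ Finset.range j, Polynomial.C (wk A i) * Polynomial.X ^ (j-1-i)

lemma FP_eval (A : Matrix (Fin n) (Fin n) ℚ) (x : ℚ) :
    (FP A).eval x = phi (Nmat A x) := by
  rw [FP, phi_Nmat, Polynomial.eval_finset_sum]
  apply Finset.sum_congr rfl
  intro j _
  rw [Polynomial.eval_mul, Polynomial.eval_C, Polynomial.eval_finset_sum]
  congr 1
  apply Finset.sum_congr rfl
  intro i _
  rw [Polynomial.eval_mul, Polynomial.eval_C, Polynomial.eval_pow, Polynomial.eval_X, mul_comm]

/-- Recursion for walk numbers beyond n. -/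
lemma wk_rec (A : Matrix (Fin n) (Fin n) ℚ) (k : ℕ) :
    wk A (n + k) = -∑ j ∈ Finset.range n, A.charpoly.coeff j * wk A (j + k) := by
  have h := ch_sum A
  rw [Finset.sum_range_succ, coeff_charpoly_n, one_smul] at h
  have hAn : (A ^ n : Matrix (Fin n) (Fin n) ℚ)
      = -∑ j ∈ Finset.range n, A.charpoly.coeff j • A ^ j := by
    linear_combination (norm := abel) h
  have : (A ^ (n + k) : Matrix (Fin n) (Fin n) ℚ)
      = -∑ j ∈ Finset.range n, A.charpoly.coeff j • A ^ (j + k) := by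
    rw [pow_add, hAn, neg_mul, Finset.sum_mul]
    congr 2
    funext j
    rw [Matrix.smul_mul, pow_add]
  rw [wk, this, map_neg, map_sum]
  congr 1
  apply Finset.sum_congr rfl
  intro j _
  rw [_root_.map_smul, smul_eq_mul, wk]

/-- Main walk-number equality from generalized cospectrality. -/
lemma wk_eq (A B : Matrix (Fin n) (Fin n) ℚ)
    (hp : A.charpoly = B.charpoly)
    (hq : (A + Jq n).charpoly = (B + Jq n).charpoly) :
    ∀ k, wk A k = wk B k := by
  -- Step 1: FP A = FP B
  have hpne : A.charpoly ≠ 0 := A.charpoly_monic.ne_zero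
  have hroots : {x : ℚ | A.charpoly.IsRoot x}.Finite := Polynomial.finite_setOf_isRoot hpne
  have hinf : {x : ℚ | A.charpoly.eval x ≠ 0}.Infinite := by
    have : {x : ℚ | A.charpoly.eval x ≠ 0} = {x : ℚ | A.charpoly.IsRoot x}ᶜ := by
      ext x; simp [Polynomial.IsRoot]
    rw [this]
    exact Set.Finite.infinite_compl hroots
  have hFP : FP A - FP B = 0 := by
    by_contra hne
    have : {x : ℚ | (FP A - FP B).IsRoot x}.Finite :=
      Polynomial.finite_setOf_isRoot hne
    have hsub : {x : ℚ | A.charpoly.eval x ≠ 0} ⊆ {x : ℚ | (FP A - FP B).IsRoot x} := by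
      intro x hx
      simp only [Set.mem_setOf_eq] at hx ⊢
      have hxB : B.charpoly.eval x ≠ 0 := by rw [← hp]; exact hx
      have hA := det_rank_one A x hx
      have hB := det_rank_one B x hxB
      rw [hq] at hA
      rw [hB, ← hp] at hA
      have hphi : phi ((x • (1 : Matrix (Fin n) (Fin n) ℚ) - A)⁻¹)
          = phi ((x • (1 : Matrix (Fin n) (Fin n) ℚ) - B)⁻¹) := by
        have := mul_left_cancel₀ hx hA
        linarith [this]
      rw [inv_eq A x hx, inv_eq B x hxB] at hphi
      rw [_root_.map_smul, _root_.map_smul, ← hp] at hphi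
      have h2 : phi (Nmat A x) = phi (Nmat B x) := by
        have h3 := hphi
        rw [smul_eq_mul, smul_eq_mul] at h3
        exact mul_left_cancel₀ (inv_ne_zero hx) h3
      rw [Polynomial.IsRoot, Polynomial.eval_sub, FP_eval, FP_eval, h2, sub_self]
    exact hinf (this.subset hsub)
  -- Step 2: triangular system gives wk equality below n
  have hlow : ∀ m, m < n → wk A m - wk B m = 0 := by
    apply tri (fun j => A.charpoly.coeff j) _ (coeff_charpoly_n A)
    have : FP A - FP B = ∑ j ∈ Finset.range (n+1), Polynomial.C (A.charpoly.coeff j) *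
        ∑ i ∈ Finset.range j, Polynomial.C (wk A i - wk B i) * Polynomial.X ^ (j-1-i) := by
      rw [FP, FP, ← hp, ← Finset.sum_sub_distrib]
      apply Finset.sum_congr rfl
      intro j _
      rw [← mul_sub, ← Finset.sum_sub_distrib]
      congr 1
      apply Finset.sum_congr rfl
      intro i _
      rw [← sub_mul, ← Polynomial.C_sub]
    rw [← this, hFP]
  -- Step 3: extend by the recursion
  intro k
  induction k using Nat.strong_induction_on with
  | _ k IH =>
    by_cases hk : k < n
    · have := hlow k hk
      linarith
    · have hkn : k = n + (k - n) := by omega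
      rw [hkn, wk_rec, wk_rec, hp]
      congr 1
      apply Finset.sum_congr rfl
      intro j hj
      rw [Finset.mem_range] at hj
      rw [IH (j + (k - n)) (by omega)]

/-- The walk matrix over ℚ. -/
noncomputable def Wq (A : Matrix (Fin n) (Fin n) ℚ) : Matrix (Fin n) (Fin n) ℚ :=
  Matrix.of fun i j => ((A ^ (j : ℕ)) *ᵥ fun _ => (1:ℚ)) i

/-- The companion matrix of a polynomial (with respect to dimension n). -/
noncomputable def Cm (p : ℚ[X]) : Matrix (Fin n) (Fin n) ℚ :=
  Matrix.of fun k j => if (j : ℕ) + 1 = n then -(p.coeff (k : ℕ))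
    else if (k : ℕ) = (j : ℕ) + 1 then 1 else 0

lemma sum_mulVec' {ι : Type*} (s : Finset ι) (f : ι → Matrix (Fin n) (Fin n) ℚ)
    (v : Fin n → ℚ) : (∑ k ∈ s, f k) *ᵥ v = ∑ k ∈ s, (f k) *ᵥ v := by
  ext i
  simp only [Matrix.mulVec, dotProduct, Matrix.sum_apply, Finset.sum_apply, Finset.sum_mul]
  rw [Finset.sum_comm]

lemma hAn (A : Matrix (Fin n) (Fin n) ℚ) :
    (A ^ n : Matrix (Fin n) (Fin n) ℚ)
      = -∑ j ∈ Finset.range n, A.charpoly.coeff j • A ^ j := by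
  have h := ch_sum A
  rw [Finset.sum_range_succ, coeff_charpoly_n, one_smul] at h
  linear_combination (norm := abel) h

/-- A·W = W·C. -/
lemma mul_walk (A : Matrix (Fin n) (Fin n) ℚ) :
    A * Wq A = Wq A * Cm (A.charpoly) := by
  ext i j
  rw [Matrix.mul_apply, Matrix.mul_apply]
  have hL : ∑ k, A i k * Wq A k j = ((A ^ ((j:ℕ)+1)) *ᵥ fun _ => (1:ℚ)) i := by
    rw [pow_succ', ← Matrix.mulVec_mulVec]
    rfl
  rw [hL]
  by_cases hj : (j : ℕ) + 1 = n
  · have : ∑ k, Wq A i k * Cm (A.charpoly) k j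
        = -∑ k : Fin n, A.charpoly.coeff (k:ℕ) * ((A ^ (k:ℕ)) *ᵥ fun _ => (1:ℚ)) i := by
      rw [← Finset.sum_neg_distrib]
      apply Finset.sum_congr rfl
      intro k _
      rw [Cm, Wq]
      simp only [Matrix.of_apply, if_pos hj]
      ring
    rw [this, hj, hAn A, Matrix.neg_mulVec,
      ← Fin.sum_univ_eq_sum_range (fun k => A.charpoly.coeff k • A ^ k), sum_mulVec']
    simp [Matrix.smul_mulVec]
  · have : ∑ k, Wq A i k * Cm (A.charpoly) k j
        = ((A ^ ((j:ℕ)+1)) *ᵥ fun _ => (1:ℚ)) i := by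
      have hjlt : (j : ℕ) + 1 < n := by have := j.isLt; omega
      rw [Finset.sum_eq_single (⟨(j:ℕ)+1, hjlt⟩ : Fin n)]
      · rw [Cm, Wq]; simp only [Matrix.of_apply, if_neg hj]; simp
      · intro k _ hk
        rw [Cm]
        simp only [Matrix.of_apply, if_neg hj]
        rw [if_neg, mul_zero]
        intro hcontra
        apply hk
        exact Fin.ext hcontra
      · intro h; exact absurd (Finset.mem_univ _) h
    rw [this]

lemma WtW (A : Matrix (Fin n) (Fin n) ℚ) (hA : Aᵀ = A) (i j : Fin n) :
    ((Wq A)ᵀ * Wq A) i j = wk A ((i : ℕ) + (j : ℕ)) := by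
  rw [Matrix.mul_apply, wk, phi_apply, pow_add, ← Matrix.mulVec_mulVec,
    Matrix.dotProduct_mulVec]
  have hv : (fun _ => (1:ℚ)) ᵥ* (A ^ (i:ℕ)) = (A ^ (i:ℕ)) *ᵥ fun _ => (1:ℚ) := by
    conv_lhs => rw [show A ^ (i:ℕ) = ((A ^ (i:ℕ))ᵀ) by rw [Matrix.transpose_pow, hA]]
    rw [Matrix.vecMul_transpose]
  rw [hv]
  simp only [dotProduct, Wq, Matrix.transpose_apply, Matrix.of_apply]

lemma colsum (A : Matrix (Fin n) (Fin n) ℚ) :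
    ((Wq A)ᵀ *ᵥ fun _ => (1:ℚ)) = fun j : Fin n => wk A (j : ℕ) := by
  funext j
  rw [wk, phi_apply]
  simp [Matrix.mulVec, dotProduct, Wq]

lemma charpoly_conj (Q M : Matrix (Fin n) (Fin n) ℚ) (h1 : Qᵀ * Q = 1) :
    (Qᵀ * M * Q).charpoly = M.charpoly := by
  let f : ℚ →+* ℚ[X] := Polynomial.C
  have hQp : (f.mapMatrix Qᵀ) * (f.mapMatrix Q) = 1 := by
    rw [← _root_.map_mul, h1, _root_.map_one]
  have hchar : charmatrix (Qᵀ * M * Q)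
      = (f.mapMatrix Qᵀ) * charmatrix M * (f.mapMatrix Q) := by
    rw [charmatrix, charmatrix]
    rw [Matrix.mul_sub, Matrix.sub_mul]
    congr 1
    · -- scalar commutes
      have : (f.mapMatrix Qᵀ) * Matrix.scalar (Fin n) (X : ℚ[X])
          = Matrix.scalar (Fin n) (X : ℚ[X]) * (f.mapMatrix Qᵀ) := by
        rw [Matrix.scalar_commute]
        intro r
        exact Polynomial.X_mul
      rw [this, Matrix.mul_assoc, hQp, Matrix.mul_one]
    · rw [_root_.map_mul, _root_.map_mul]
  rw [Matrix.charpoly, Matrix.charpoly, hchar, Matrix.det_mul, Matrix.det_mul]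
  have hdet1 : (f.mapMatrix Qᵀ).det * (f.mapMatrix Q).det = 1 := by
    rw [← Matrix.det_mul, hQp, Matrix.det_one]
  calc (f.mapMatrix Qᵀ).det * (charmatrix M).det * (f.mapMatrix Q).det
      = (f.mapMatrix Qᵀ).det * (f.mapMatrix Q).det * (charmatrix M).det := by ring
    _ = (charmatrix M).det := by rw [hdet1, one_mul]

/-- Converse direction plus the formula for Q. -/
lemma good_props (A B Q : Matrix (Fin n) (Fin n) ℚ) (hdetA : (Wq A).det ≠ 0)
    (h1 : Qᵀ * Q = 1) (h2 : (Q *ᵥ fun _ => (1:ℚ)) = fun _ => 1)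
    (h3 : Qᵀ * A * Q = B) :
    Qᵀ = Wq B * (Wq A)⁻¹ ∧ A.charpoly = B.charpoly ∧
      (A + Jq n).charpoly = (B + Jq n).charpoly := by
  have hQQt : Q * Qᵀ = 1 := mul_eq_one_comm.mp h1
  have hQte : (Qᵀ *ᵥ fun _ => (1:ℚ)) = fun _ => 1 := by
    calc Qᵀ *ᵥ (fun _ => (1:ℚ)) = Qᵀ *ᵥ (Q *ᵥ fun _ => 1) := by rw [h2]
      _ = (Qᵀ * Q) *ᵥ (fun _ => 1) := by rw [Matrix.mulVec_mulVec]
      _ = (fun _ => 1) := by rw [h1, Matrix.one_mulVec]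
  have hcomm : Qᵀ * A = B * Qᵀ := by
    calc Qᵀ * A = Qᵀ * A * (Q * Qᵀ) := by rw [hQQt, Matrix.mul_one]
      _ = (Qᵀ * A * Q) * Qᵀ := by simp only [Matrix.mul_assoc]
      _ = B * Qᵀ := by rw [h3]
  have hpow : ∀ k : ℕ, Qᵀ * A ^ k = B ^ k * Qᵀ := by
    intro k; induction k with
    | zero => simp
    | succ k ih =>
      calc Qᵀ * A ^ (k+1) = (Qᵀ * A) * A ^ k := by
            rw [pow_succ', ← Matrix.mul_assoc]
        _ = B * (Qᵀ * A ^ k) := by rw [hcomm, Matrix.mul_assoc]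
        _ = B * (B ^ k * Qᵀ) := by rw [ih]
        _ = B ^ (k+1) * Qᵀ := by rw [← Matrix.mul_assoc, ← pow_succ']
  have hcol : ∀ (M : Matrix (Fin n) (Fin n) ℚ) (i j : Fin n),
      (M * Wq A) i j = (M *ᵥ ((A ^ (j:ℕ)) *ᵥ fun _ => (1:ℚ))) i := by
    intro M i j
    rw [Matrix.mul_apply]
    simp [Wq, Matrix.mulVec, dotProduct]
  have hQW : Qᵀ * Wq A = Wq B := by
    ext i j
    rw [hcol, Matrix.mulVec_mulVec, hpow, ← Matrix.mulVec_mulVec, hQte]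
    rfl
  have hformula : Qᵀ = Wq B * (Wq A)⁻¹ := by
    calc Qᵀ = Qᵀ * (Wq A * (Wq A)⁻¹) := by
          rw [Matrix.mul_nonsing_inv _ (isUnit_iff_ne_zero.mpr hdetA), Matrix.mul_one]
      _ = (Qᵀ * Wq A) * (Wq A)⁻¹ := by rw [Matrix.mul_assoc]
      _ = Wq B * (Wq A)⁻¹ := by rw [hQW]
  have hsum : ∀ i, (∑ a, Q a i) = (1:ℚ) := by
    intro i
    have := congrFun hQte i
    simpa [Matrix.mulVec, dotProduct] using this
  have hJ : Qᵀ * Jq n * Q = Jq n := by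
    ext i j
    rw [Matrix.mul_apply]
    have : ∀ b, (Qᵀ * Jq n) i b = 1 := by
      intro b
      rw [Matrix.mul_apply]
      simp only [Jq, Matrix.of_apply, Matrix.transpose_apply, mul_one]
      exact hsum i
    simp only [this, one_mul]
    simpa [Jq] using hsum j
  refine ⟨hformula, ?_, ?_⟩
  · rw [← h3, charpoly_conj Q A h1]
  · have : Qᵀ * (A + Jq n) * Q = B + Jq n := by
      rw [Matrix.mul_add, Matrix.add_mul, h3, hJ]
    rw [← this, charpoly_conj Q (A + Jq n) h1]

/-- Existence of Q from generalized cospectrality. -/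
lemma exists_good (A B : Matrix (Fin n) (Fin n) ℚ) (hAs : Aᵀ = A) (hBs : Bᵀ = B)
    (hdetA : (Wq A).det ≠ 0)
    (hp : A.charpoly = B.charpoly)
    (hq : (A + Jq n).charpoly = (B + Jq n).charpoly) :
    ∃ Q : Matrix (Fin n) (Fin n) ℚ, Qᵀ * Q = 1 ∧ (Q *ᵥ fun _ => (1:ℚ)) = (fun _ => 1) ∧
      Qᵀ * A * Q = B := by
  have hwk := wk_eq A B hp hq
  have hWW : (Wq B)ᵀ * Wq B = (Wq A)ᵀ * Wq A := by
    ext i j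
    rw [WtW B hBs, WtW A hAs, hwk]
  have hdetB : (Wq B).det ≠ 0 := by
    intro h0
    have : ((Wq B)ᵀ * Wq B).det = 0 := by rw [Matrix.det_mul, h0, mul_zero]
    rw [hWW, Matrix.det_mul, Matrix.det_transpose] at this
    exact hdetA (by
      rcases mul_eq_zero.mp this with h | h
      · exact h
      · exact h)
  have hAunit : IsUnit (Wq A).det := isUnit_iff_ne_zero.mpr hdetA
  have hAtunit : IsUnit ((Wq A)ᵀ).det := by rwa [Matrix.det_transpose]
  set W := Wq A with hWdef
  set V := Wq B with hVdef
  have hWWinv : W * W⁻¹ = 1 := Matrix.mul_nonsing_inv _ hAunit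
  have hWinvW : W⁻¹ * W = 1 := Matrix.nonsing_inv_mul _ hAunit
  have hQt : ((W⁻¹ᵀ * Vᵀ))ᵀ = V * W⁻¹ := by
    rw [Matrix.transpose_mul, Matrix.transpose_transpose, Matrix.transpose_transpose]
  have hQQt : (W⁻¹ᵀ * Vᵀ) * (V * W⁻¹) = 1 := by
    calc W⁻¹ᵀ * Vᵀ * (V * W⁻¹) = W⁻¹ᵀ * ((Vᵀ * V) * W⁻¹) := by
          simp only [Matrix.mul_assoc]
      _ = W⁻¹ᵀ * ((Wᵀ * W) * W⁻¹) := by rw [hWW]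
      _ = W⁻¹ᵀ * Wᵀ * (W * W⁻¹) := by simp only [Matrix.mul_assoc]
      _ = W⁻¹ᵀ * Wᵀ := by rw [hWWinv, Matrix.mul_one]
      _ = (W * W⁻¹)ᵀ := by rw [Matrix.transpose_mul]
      _ = 1 := by rw [hWWinv, Matrix.transpose_one]
  have hprop1 : (W⁻¹ᵀ * Vᵀ)ᵀ * (W⁻¹ᵀ * Vᵀ) = 1 := by
    refine mul_eq_one_comm.mp ?_
    rw [hQt]
    exact hQQt
  refine ⟨W⁻¹ᵀ * Vᵀ, hprop1, ?_, ?_⟩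
  · -- Q e = e
    have hfun : (fun j : Fin n => wk B (j:ℕ)) = fun j : Fin n => wk A (j:ℕ) :=
      funext fun j => (hwk (j:ℕ)).symm
    rw [← Matrix.mulVec_mulVec]
    rw [hVdef, colsum B, hfun, ← colsum A, ← hWdef, Matrix.mulVec_mulVec,
      ← Matrix.transpose_mul, hWWinv, Matrix.transpose_one, Matrix.one_mulVec]
  · -- Qᵀ A Q = B
    have hWinvA : W⁻¹ * A = Cm A.charpoly * W⁻¹ := by
      calc W⁻¹ * A = W⁻¹ * A * (W * W⁻¹) := by rw [hWWinv, Matrix.mul_one]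
        _ = W⁻¹ * (A * W) * W⁻¹ := by simp only [Matrix.mul_assoc]
        _ = W⁻¹ * (W * Cm A.charpoly) * W⁻¹ := by rw [hWdef, mul_walk A]
        _ = (W⁻¹ * W) * Cm A.charpoly * W⁻¹ := by simp only [Matrix.mul_assoc]
        _ = Cm A.charpoly * W⁻¹ := by rw [hWinvW, Matrix.one_mul]
    have hVC : V * Cm A.charpoly = B * V := by
      rw [hp, hVdef, ← mul_walk B]
    rw [hQt]
    calc V * W⁻¹ * A * (W⁻¹ᵀ * Vᵀ) = V * (W⁻¹ * A) * (W⁻¹ᵀ * Vᵀ) := by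
          simp only [Matrix.mul_assoc]
      _ = V * (Cm A.charpoly * W⁻¹) * (W⁻¹ᵀ * Vᵀ) := by rw [hWinvA]
      _ = (V * Cm A.charpoly) * (W⁻¹ * (W⁻¹ᵀ * Vᵀ)) := by simp only [Matrix.mul_assoc]
      _ = (B * V) * (W⁻¹ * (W⁻¹ᵀ * Vᵀ)) := by rw [hVC]
      _ = B * ((V * W⁻¹) * (W⁻¹ᵀ * Vᵀ)) := by simp only [Matrix.mul_assoc]
      _ = B := by
          rw [mul_eq_one_comm.mp hQQt, Matrix.mul_one]

/-- Bridging: walk matrix. -/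
lemma Wq_map {G : SimpleGraph (Fin n)} [DecidableRel G.Adj] :
    Wq ((adjMat G).map (Int.cast : ℤ → ℚ)) = (walkMat G).map (Int.cast : ℤ → ℚ) := by
  have hmap : (adjMat G).map (Int.cast : ℤ → ℚ)
      = (Int.castRingHom ℚ).mapMatrix (adjMat G) := rfl
  ext i j
  simp only [Wq, Matrix.of_apply, Matrix.map_apply, walkMat, Matrix.mulVec, dotProduct,
    mul_one, hmap, ← map_pow]
  push_cast
  simp [RingHom.mapMatrix_apply, Matrix.map_apply]

lemma charpoly_map_iff (M N : Matrix (Fin n) (Fin n) ℤ) :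
    (M.map (Int.cast : ℤ → ℚ)).charpoly = (N.map (Int.cast : ℤ → ℚ)).charpoly
      ↔ M.charpoly = N.charpoly := by
  have hM : (M.map (Int.cast : ℤ → ℚ)).charpoly = M.charpoly.map (Int.castRingHom ℚ) :=
    Matrix.charpoly_map M (Int.castRingHom ℚ)
  have hN : (N.map (Int.cast : ℤ → ℚ)).charpoly = N.charpoly.map (Int.castRingHom ℚ) :=
    Matrix.charpoly_map N (Int.castRingHom ℚ)
  rw [hM, hN]
  constructor
  · intro h
    exact Polynomial.map_injective _ (fun a b hab => by simpa using hab) h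
  · intro h; rw [h]

lemma J_map : (Jmat n).map (Int.cast : ℤ → ℚ) = Jq n := by
  ext i j; simp [Jmat, Jq]

lemma addJ_map (M : Matrix (Fin n) (Fin n) ℤ) :
    (M + Jmat n).map (Int.cast : ℤ → ℚ) = M.map (Int.cast : ℤ → ℚ) + Jq n := by
  rw [← J_map]
  ext i j; simp [Matrix.map_apply, Matrix.add_apply]

lemma adj_symm {G : SimpleGraph (Fin n)} [DecidableRel G.Adj] :
    ((adjMat G).map (Int.cast : ℤ → ℚ))ᵀ = (adjMat G).map (Int.cast : ℤ → ℚ) := by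
  rw [← Matrix.transpose_map,
    show (adjMat G)ᵀ = adjMat G from SimpleGraph.transpose_adjMatrix (G := G) (α := ℤ)]

lemma det_map_ne {G : SimpleGraph (Fin n)} [DecidableRel G.Adj]
    (hcon : (walkMat G).det ≠ 0) : (Wq ((adjMat G).map (Int.cast : ℤ → ℚ))).det ≠ 0 := by
  rw [Wq_map]
  have : ((walkMat G).map (Int.cast : ℤ → ℚ)).det
      = ((Int.castRingHom ℚ) (walkMat G).det : ℚ) := by
    rw [RingHom.map_det]; rfl
  rw [this]
  simpa using hcon

end GCH


/-- **Lemma.** Let G be controllable.  H is generalized cospectral with G iff there is a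
regular rational orthogonal matrix Q with QᵀA(G)Q = A(H); moreover such Q is unique and
satisfies Qᵀ = W(H)·W(G)⁻¹. -/
theorem genCospectral_iff_exists_regular_orthogonal {n : ℕ} (G H : SimpleGraph (Fin n))
    [DecidableRel G.Adj] [DecidableRel H.Adj] (hcon : (walkMat G).det ≠ 0) :
    (genCospectral G H ↔ ∃ Q : Matrix (Fin n) (Fin n) ℚ,
        Qᵀ * Q = 1 ∧ (Q *ᵥ fun _ => (1 : ℚ)) = (fun _ => 1) ∧
        Qᵀ * (adjMat G).map (Int.cast : ℤ → ℚ) * Q = (adjMat H).map (Int.cast : ℤ → ℚ)) ∧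
    ∀ Q : Matrix (Fin n) (Fin n) ℚ,
      (Qᵀ * Q = 1 ∧ (Q *ᵥ fun _ => (1 : ℚ)) = (fun _ => 1) ∧
        Qᵀ * (adjMat G).map (Int.cast : ℤ → ℚ) * Q = (adjMat H).map (Int.cast : ℤ → ℚ)) →
      (Qᵀ = (walkMat H).map (Int.cast : ℤ → ℚ) * ((walkMat G).map (Int.cast : ℤ → ℚ))⁻¹ ∧
       ∀ Q' : Matrix (Fin n) (Fin n) ℚ,
         (Q'ᵀ * Q' = 1 ∧ (Q' *ᵥ fun _ => (1 : ℚ)) = (fun _ => 1) ∧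
           Q'ᵀ * (adjMat G).map (Int.cast : ℤ → ℚ) * Q' =
             (adjMat H).map (Int.cast : ℤ → ℚ)) →
         Q' = Q) := by
  set A : Matrix (Fin n) (Fin n) ℚ := (adjMat G).map (Int.cast : ℤ → ℚ) with hA
  set B : Matrix (Fin n) (Fin n) ℚ := (adjMat H).map (Int.cast : ℤ → ℚ) with hB
  have hdetA : (GCH.Wq A).det ≠ 0 := GCH.det_map_ne hcon
  constructor
  · constructor
    · rintro ⟨hp, hq⟩
      have hpq : A.charpoly = B.charpoly := by
        rw [hA, hB, GCH.charpoly_map_iff]; exact hp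
      have hqq : (A + GCH.Jq n).charpoly = (B + GCH.Jq n).charpoly := by
        rw [hA, hB, ← GCH.addJ_map, ← GCH.addJ_map, GCH.charpoly_map_iff]; exact hq
      exact GCH.exists_good A B GCH.adj_symm GCH.adj_symm hdetA hpq hqq
    · rintro ⟨Q, h1, h2, h3⟩
      obtain ⟨-, hpq, hqq⟩ := GCH.good_props A B Q hdetA h1 h2 h3
      refine ⟨?_, ?_⟩
      · rw [← GCH.charpoly_map_iff]; exact hpq
      · rw [← GCH.charpoly_map_iff]
        rw [GCH.addJ_map, GCH.addJ_map]; exact hqq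
  · rintro Q ⟨h1, h2, h3⟩
    obtain ⟨hform, -, -⟩ := GCH.good_props A B Q hdetA h1 h2 h3
    have hform' : Qᵀ = (walkMat H).map (Int.cast : ℤ → ℚ) *
        ((walkMat G).map (Int.cast : ℤ → ℚ))⁻¹ := by
      rw [hform, GCH.Wq_map (G := H), GCH.Wq_map (G := G)]
    refine ⟨hform', ?_⟩
    rintro Q' ⟨h1', h2', h3'⟩
    obtain ⟨hform2, -, -⟩ := GCH.good_props A B Q' hdetA h1' h2' h3'
    have : Q'ᵀ = Qᵀ := by rw [hform2, hform]
    calc Q' = Q'ᵀᵀ := by rw [Matrix.transpose_transpose]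
      _ = Qᵀᵀ := by rw [this]
      _ = Q := by rw [Matrix.transpose_transpose]
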